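/- arXiv:2410.22540 — 8 statements merged into one kernel-verified Lean document; each statement's English description precedes it below -/
import Mathlib

section
/- Let X and Y be countable sets. The map h : D(X) × ∏_{x∈X} D(Y_⊥) → D(Y_⊥) defined by h(μ, (ν_x)_{x∈X}) := ∑_{x∈X} μ(x)·ν_x is continuous, where D(X) carries the subspace topology of the product topology on [0,1]^X, ∏_{x∈X} D(Y_⊥) carries the product topology with each factor a subspace of [0,1]^{Y_⊥}, and the codomain D(Y_⊥) carries the subspace topology of [0,1]^{Y_⊥}. -/
open scoped Classical
open Filter Topology

namespace DOL

/-- A discrete probability distribution on `X`: pointwise nonnegative with total mass 1. -/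
def IsDist {X : Type*} (μ : X → ℝ) : Prop := (∀ x, 0 ≤ μ x) ∧ HasSum μ 1

/-- The point-mass (Dirac) distribution at `x`. -/
noncomputable def dirac {X : Type*} (x : X) : X → ℝ := fun y => if y = x then 1 else 0

/-- The order `⊑_D` on distributions over `X_⊥ = Option X` (with `⊥ = none`):
pointwise comparison at proper states only. -/
def dle {X : Type*} (μ ν : Option X → ℝ) : Prop := ∀ x : X, μ (some x) ≤ ν (some x)

/-- Up-closure of a set of distributions over `X_⊥` (within `D(X_⊥)`). -/
def upClo {X : Type*} (S : Set (Option X → ℝ)) : Set (Option X → ℝ) :=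
  {ν | IsDist ν ∧ ∃ μ ∈ S, dle μ ν}

/-- Convexity of a set of functions, with pointwise convex combinations. -/
def IsConvexSet {X : Type*} (S : Set (X → ℝ)) : Prop :=
  ∀ μ ∈ S, ∀ ν ∈ S, ∀ p : ℝ, 0 ≤ p → p ≤ 1 →
    (fun x => p * μ x + (1 - p) * ν x) ∈ S

/-- Membership in `C(X)`: nonempty, consisting of distributions over `X_⊥`,
convex, (topologically) closed, and up-closed. -/
def memC {X : Type*} (S : Set (Option X → ℝ)) : Prop :=
  S.Nonempty ∧ (∀ μ ∈ S, IsDist μ) ∧ IsConvexSet S ∧ IsClosed S ∧ upClo S = S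

/-- Bottom-lifting of a set-valued map: `f_⊥(⊥) = ↑{δ_⊥}`. -/
noncomputable def fbot {X Y : Type*} (f : X → Set (Option Y → ℝ)) :
    Option X → Set (Option Y → ℝ) :=
  fun x => match x with
  | some x => f x
  | none => upClo {dirac (none : Option Y)}

/-- Kleisli extension: all convex mixtures `∑_{x ∈ supp μ} μ(x)·ν_x` with `μ ∈ S`
and `ν_x ∈ f_⊥(x)` on the support of `μ`. -/
noncomputable def kleisli {X Y : Type*} (f : X → Set (Option Y → ℝ))
    (S : Set (Option X → ℝ)) : Set (Option Y → ℝ) :=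
  {ξ | ∃ μ ∈ S, ∃ ν : Option X → (Option Y → ℝ),
    (∀ x, 0 < μ x → ν x ∈ fbot f x) ∧ (∀ y, ξ y = ∑' x, μ x * ν x y)}

/-- Probabilistic choice between sets of distributions. -/
def pchoice {X : Type*} (p : ℝ) (S T : Set (Option X → ℝ)) : Set (Option X → ℝ) :=
  {ξ | ∃ μ ∈ S, ∃ ν ∈ T, ξ = fun x => p * μ x + (1 - p) * ν x}

/-- The monad unit `η(x) = ↑{δ_x}`. -/
noncomputable def eta {X : Type*} (x : X) : Set (Option X → ℝ) := upClo {dirac (some x)}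

/-- The loop characteristic functional. -/
noncomputable def Phi {St : Type*} (c : St → Set (Option St → ℝ)) (b : St → Bool)
    (f : St → Set (Option St → ℝ)) : St → Set (Option St → ℝ) :=
  fun σ => if b σ then kleisli f (c σ) else upClo {dirac (some σ)}


/-- Tail estimate: for distributions, the mixture sum is approximated by finite partial
sums, with error controlled by the tail mass of `μ`. -/
lemma mix_tail_bound {X Y : Type*} (y : Option Y) (μ : X → ℝ) (ν : X → Option Y → ℝ)
    (hμ : IsDist μ) (hν : ∀ x, IsDist (ν x)) (F : Finset X) :
    |(∑' x, μ x * ν x y) - ∑ x ∈ F, μ x * ν x y| ≤ 1 - ∑ x ∈ F, μ x := by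
  have hμs : Summable μ := hμ.2.summable
  have hb : ∀ x, 0 ≤ μ x * ν x y ∧ μ x * ν x y ≤ μ x := by
    intro x
    have h0 : 0 ≤ ν x y := (hν x).1 y
    have h1 : ν x y ≤ 1 := le_hasSum (hν x).2 y (fun j _ => (hν x).1 j)
    have h2 := hμ.1 x
    exact ⟨mul_nonneg h2 h0, by nlinarith⟩
  have hs : Summable (fun x => μ x * ν x y) :=
    Summable.of_nonneg_of_le (fun x => (hb x).1) (fun x => (hb x).2) hμs
  have h1 : ∑ x ∈ F, μ x * ν x y + ∑' x : ↑(↑F : Set X)ᶜ, μ x * ν x y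
      = ∑' x, μ x * ν x y := Summable.sum_add_tsum_compl hs
  have h2 : ∑ x ∈ F, μ x + ∑' x : ↑(↑F : Set X)ᶜ, μ x = 1 := by
    rw [Summable.sum_add_tsum_compl hμs, hμ.2.tsum_eq]
  have h3 : ∑' x : ↑(↑F : Set X)ᶜ, μ x * ν x y ≤ ∑' x : ↑(↑F : Set X)ᶜ, μ x :=
    Summable.tsum_le_tsum (fun x => (hb x).2) (hs.subtype _) (hμs.subtype _)
  have h4 : 0 ≤ ∑' x : ↑(↑F : Set X)ᶜ, μ x * ν x y :=
    tsum_nonneg (fun x => (hb x).1)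
  have h5 : 0 ≤ ∑' x : ↑(↑F : Set X)ᶜ, μ x := tsum_nonneg (fun x => hμ.1 x)
  rw [abs_le]
  constructor <;> linarith

/-- continuity of `h(μ, (ν_x)_x) = ∑_x μ(x)·ν_x` on `D(X) × ∏_x D(Y_⊥)`. -/
theorem mix_continuousOn {X Y : Type*} [Countable X] [Countable Y] :
    ContinuousOn
      (fun q : (X → ℝ) × (X → (Option Y → ℝ)) =>
        (fun y : Option Y => ∑' x, q.1 x * q.2 x y))
      ({μ : X → ℝ | IsDist μ} ×ˢ {ν : X → (Option Y → ℝ) | ∀ x, IsDist (ν x)}) := by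
  rw [continuousOn_pi]
  intro y q₀ hq₀
  obtain ⟨hμ₀, hν₀⟩ := hq₀
  have : Tendsto (fun q : (X → ℝ) × (X → (Option Y → ℝ)) => ∑' x, q.1 x * q.2 x y)
      (𝓝[({μ : X → ℝ | IsDist μ} ×ˢ {ν : X → (Option Y → ℝ) | ∀ x, IsDist (ν x)})] q₀)
      (𝓝 (∑' x, q₀.1 x * q₀.2 x y)) := by
    rw [Metric.tendsto_nhds]
    intro ε hε
    have hev : ∀ᶠ F : Finset X in atTop, 1 - ε / 4 < ∑ x ∈ F, q₀.1 x :=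
      hμ₀.2.eventually (lt_mem_nhds (by linarith))
    obtain ⟨F, hF⟩ := hev.exists
    set c1 : (X → ℝ) × (X → (Option Y → ℝ)) → ℝ := fun q => ∑ x ∈ F, q.1 x * q.2 x y
      with hc1def
    set c2 : (X → ℝ) × (X → (Option Y → ℝ)) → ℝ := fun q => ∑ x ∈ F, q.1 x with hc2def
    have hc1 : Continuous c1 := by
      apply continuous_finset_sum
      intro x _
      exact ((continuous_apply x).comp continuous_fst).mul
        ((continuous_apply y).comp ((continuous_apply x).comp continuous_snd))
    have hc2 : Continuous c2 :=
      continuous_finset_sum _ fun x _ => (continuous_apply x).comp continuous_fst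
    have hU : ∀ᶠ q in 𝓝 q₀, |c1 q - c1 q₀| < ε / 4 ∧ 1 - ε / 4 < c2 q := by
      apply Filter.Eventually.and
      · have h := Metric.tendsto_nhds.mp (hc1.tendsto q₀) (ε / 4) (by linarith)
        simpa [Real.dist_eq] using h
      · exact (hc2.tendsto q₀).eventually (lt_mem_nhds hF)
    filter_upwards [hU.filter_mono nhdsWithin_le_nhds, self_mem_nhdsWithin] with q hq hqS
    obtain ⟨hqμ, hqν⟩ := hqS
    obtain ⟨h1, h2⟩ := hq
    have k := mix_tail_bound y q.1 q.2 hqμ hqν F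
    have k0 := mix_tail_bound y q₀.1 q₀.2 hμ₀ hν₀ F
    rw [Real.dist_eq]
    have tri : |(∑' x, q.1 x * q.2 x y) - (∑' x, q₀.1 x * q₀.2 x y)| ≤
        |(∑' x, q.1 x * q.2 x y) - c1 q| + |c1 q - c1 q₀|
          + |c1 q₀ - (∑' x, q₀.1 x * q₀.2 x y)| := by
      calc |(∑' x, q.1 x * q.2 x y) - (∑' x, q₀.1 x * q₀.2 x y)|
          ≤ |(∑' x, q.1 x * q.2 x y) - c1 q|
            + |c1 q - (∑' x, q₀.1 x * q₀.2 x y)| := abs_sub_le _ _ _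
        _ ≤ |(∑' x, q.1 x * q.2 x y) - c1 q| + (|c1 q - c1 q₀|
            + |c1 q₀ - (∑' x, q₀.1 x * q₀.2 x y)|) := by
            gcongr
            exact abs_sub_le _ _ _
        _ = _ := by ring
    have k0' : |c1 q₀ - (∑' x, q₀.1 x * q₀.2 x y)| ≤ 1 - c2 q₀ := by
      rw [abs_sub_comm]; exact k0
    linarith
  exact this

end DOL
end

section
/- Let X and Y be countable sets, f : X → C(Y), and S ∈ C(X). Then the Kleisli extension f†(S) is a convex subset of D(Y_⊥): for all μ, ν ∈ f†(S) and p ∈ [0,1], p·μ + (1−p)·ν ∈ f†(S). -/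
open scoped Classical
open Filter Topology

namespace DOL

lemma isDist_convex {X : Type*} {μ ν : Option X → ℝ} (hμ : IsDist μ) (hν : IsDist ν)
    {p : ℝ} (hp : 0 ≤ p) (hp1 : p ≤ 1) :
    IsDist (fun x => p * μ x + (1 - p) * ν x) := by
  constructor
  · intro x
    have := hμ.1 x; have := hν.1 x
    dsimp only
    nlinarith
  · have h := (hμ.2.mul_left p).add (hν.2.mul_left (1 - p))
    simpa using h

lemma mem_fbot_isDist {X Y : Type*} {f : X → Set (Option Y → ℝ)} (hf : ∀ x, memC (f x))
    {x : Option X} {ρ : Option Y → ℝ} (h : ρ ∈ fbot f x) : IsDist ρ := by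
  cases x with
  | some x => exact (hf x).2.1 ρ h
  | none => exact h.1

lemma fbot_convex {X Y : Type*} {f : X → Set (Option Y → ℝ)} (hf : ∀ x, memC (f x))
    (x : Option X) : IsConvexSet (fbot f x) := by
  cases x with
  | some x => exact (hf x).2.2.1
  | none =>
    intro μ hμ ν hν p hp hp1
    refine ⟨isDist_convex hμ.1 hν.1 hp hp1, dirac none, rfl, ?_⟩
    intro y
    have h1 := hμ.1.1 (some y)
    have h2 := hν.1.1 (some y)
    have h3 : dirac (none : Option Y) (some y) = 0 := by simp [dirac]
    rw [h3]
    dsimp only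
    nlinarith

lemma isDist_le_one {X : Type*} {μ : X → ℝ} (h : IsDist μ) (x : X) : μ x ≤ 1 :=
  le_hasSum h.2 x (fun j _ => h.1 j)

lemma summable_mul_dist {X Y : Type*} {f : X → Set (Option Y → ℝ)} (hf : ∀ x, memC (f x))
    {μ₁ : Option X → ℝ} (hd₁ : IsDist μ₁) {ν₁ : Option X → (Option Y → ℝ)}
    (hν₁ : ∀ x, 0 < μ₁ x → ν₁ x ∈ fbot f x) (y : Option Y) :
    Summable (fun x => μ₁ x * ν₁ x y) := by
  refine Summable.of_nonneg_of_le ?_ ?_ hd₁.2.summable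
  · intro x
    rcases lt_or_eq_of_le (hd₁.1 x) with h | h
    · exact mul_nonneg h.le ((mem_fbot_isDist hf (hν₁ x h)).1 y)
    · rw [← h, zero_mul]
  · intro x
    rcases lt_or_eq_of_le (hd₁.1 x) with h | h
    · calc μ₁ x * ν₁ x y ≤ μ₁ x * 1 :=
            mul_le_mul_of_nonneg_left (isDist_le_one (mem_fbot_isDist hf (hν₁ x h)) y) h.le
        _ = μ₁ x := mul_one _
    · rw [← h, zero_mul]


/-- the Kleisli extension `f†(S)` is convex. -/
theorem kleisli_convex {X Y : Type*} [Countable X] [Countable Y]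
    (f : X → Set (Option Y → ℝ)) (hf : ∀ x, memC (f x))
    (S : Set (Option X → ℝ)) (hS : memC S) :
    IsConvexSet (kleisli f S) := by
  rintro ξ₁ ⟨μ₁, hμ₁S, ν₁, hν₁, hξ₁⟩ ξ₂ ⟨μ₂, hμ₂S, ν₂, hν₂, hξ₂⟩ p hp hp1
  have hd₁ : IsDist μ₁ := hS.2.1 μ₁ hμ₁S
  have hd₂ : IsDist μ₂ := hS.2.1 μ₂ hμ₂S
  set μ : Option X → ℝ := fun x => p * μ₁ x + (1 - p) * μ₂ x with hμdef
  have hμS : μ ∈ S := hS.2.2.1 μ₁ hμ₁S μ₂ hμ₂S p hp hp1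
  set ν₁' : Option X → (Option Y → ℝ) := fun x => if 0 < μ₁ x then ν₁ x else ν₂ x with hν₁'
  set ν₂' : Option X → (Option Y → ℝ) := fun x => if 0 < μ₂ x then ν₂ x else ν₁ x with hν₂'
  set ν : Option X → (Option Y → ℝ) :=
    fun x y => (p * μ₁ x / μ x) * ν₁' x y + (1 - p * μ₁ x / μ x) * ν₂' x y with hνdef
  refine ⟨μ, hμS, ν, ?_, ?_⟩
  · intro x hx
    have h1 : 0 ≤ p * μ₁ x := mul_nonneg hp (hd₁.1 x)
    have h2 : 0 ≤ (1 - p) * μ₂ x := mul_nonneg (by linarith) (hd₂.1 x)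
    have hmem1 : ν₁' x ∈ fbot f x := by
      by_cases h : 0 < μ₁ x
      · simp only [hν₁', if_pos h]; exact hν₁ x h
      · have hμ₁0 : μ₁ x = 0 := le_antisymm (not_lt.mp h) (hd₁.1 x)
        have hpos : 0 < μ₂ x := by
          by_contra hc
          have h0 : μ₂ x = 0 := le_antisymm (not_lt.mp hc) (hd₂.1 x)
          simp only [hμdef, hμ₁0, h0, mul_zero, add_zero] at hx
          linarith
        simp only [hν₁', if_neg h]; exact hν₂ x hpos
    have hmem2 : ν₂' x ∈ fbot f x := by
      by_cases h : 0 < μ₂ x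
      · simp only [hν₂', if_pos h]; exact hν₂ x h
      · have hμ₂0 : μ₂ x = 0 := le_antisymm (not_lt.mp h) (hd₂.1 x)
        have hpos : 0 < μ₁ x := by
          by_contra hc
          have h0 : μ₁ x = 0 := le_antisymm (not_lt.mp hc) (hd₁.1 x)
          simp only [hμdef, hμ₂0, h0, mul_zero, zero_add] at hx
          linarith
        simp only [hν₂', if_neg h]; exact hν₁ x hpos
    have hq0 : 0 ≤ p * μ₁ x / μ x := div_nonneg h1 hx.le
    have hq1 : p * μ₁ x / μ x ≤ 1 := by
      rw [div_le_one hx]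
      simp only [hμdef]; linarith
    exact fbot_convex hf x (ν₁' x) hmem1 (ν₂' x) hmem2 _ hq0 hq1
  · intro y
    have key : ∀ x, μ x * ν x y = p * (μ₁ x * ν₁ x y) + (1 - p) * (μ₂ x * ν₂ x y) := by
      intro x
      have h1 : 0 ≤ p * μ₁ x := mul_nonneg hp (hd₁.1 x)
      have h2 : 0 ≤ (1 - p) * μ₂ x := mul_nonneg (by linarith) (hd₂.1 x)
      have e1 : p * μ₁ x * ν₁' x y = p * μ₁ x * ν₁ x y := by
        simp only [hν₁']
        by_cases h : 0 < μ₁ x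
        · rw [if_pos h]
        · have h0 : μ₁ x = 0 := le_antisymm (not_lt.mp h) (hd₁.1 x)
          rw [h0]; ring
      have e2 : (1 - p) * μ₂ x * ν₂' x y = (1 - p) * μ₂ x * ν₂ x y := by
        simp only [hν₂']
        by_cases h : 0 < μ₂ x
        · rw [if_pos h]
        · have h0 : μ₂ x = 0 := le_antisymm (not_lt.mp h) (hd₂.1 x)
          rw [h0]; ring
      have hμx : μ x = p * μ₁ x + (1 - p) * μ₂ x := rfl
      rcases lt_or_eq_of_le (by linarith : (0:ℝ) ≤ μ x) with hx | hx
      · have hne : μ x ≠ 0 := ne_of_gt hx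
        have hmul : μ x * (p * μ₁ x / μ x) = p * μ₁ x := by
          field_simp
        have hmul2 : μ x * (1 - p * μ₁ x / μ x) = (1 - p) * μ₂ x := by
          have : μ x = p * μ₁ x + (1 - p) * μ₂ x := rfl
          field_simp
          linarith [this]
        calc μ x * ν x y
            = μ x * (p * μ₁ x / μ x) * ν₁' x y + μ x * (1 - p * μ₁ x / μ x) * ν₂' x y := by
              simp only [hνdef]; ring
          _ = p * μ₁ x * ν₁ x y + (1 - p) * μ₂ x * ν₂ x y := by
              rw [hmul, hmul2, e1, e2]
          _ = p * (μ₁ x * ν₁ x y) + (1 - p) * (μ₂ x * ν₂ x y) := by ring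
      · have hz1 : p * μ₁ x = 0 := by
          have : p * μ₁ x + (1 - p) * μ₂ x = 0 := hx.symm
          linarith
        have hz2 : (1 - p) * μ₂ x = 0 := by
          have : p * μ₁ x + (1 - p) * μ₂ x = 0 := hx.symm
          linarith
        have : μ x = 0 := hx.symm
        rw [this, zero_mul, ← mul_assoc, ← mul_assoc, hz1, hz2]
        ring
    have s1 : Summable (fun x => μ₁ x * ν₁ x y) := summable_mul_dist hf hd₁ hν₁ y
    have s2 : Summable (fun x => μ₂ x * ν₂ x y) := summable_mul_dist hf hd₂ hν₂ y
    simp only []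
    rw [hξ₁ y, hξ₂ y, ← tsum_mul_left, ← tsum_mul_left,
      ← Summable.tsum_add (s1.mul_left p) (s2.mul_left (1 - p))]
    exact (tsum_congr key).symm

end DOL
end

section
/- (Monad left identity.) Let X be a countable set and let η : X → C(X) be the unit η(x) := ↑{δ_x}. Then for every S ∈ C(X), the Kleisli extension of the unit is the identity: η†(S) = S. -/
open scoped Classical
open Filter Topology

namespace DOL

lemma isDist_dirac {X : Type*} (x : X) : IsDist (dirac x) := by
  constructor
  · intro y; unfold dirac; split <;> norm_num
  · unfold dirac; exact hasSum_ite_eq x (1:ℝ)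

lemma dirac_mem_fbot_eta {X : Type*} (x : Option X) :
    dirac x ∈ fbot (fun x : X => eta x) x := by
  cases x with
  | none => exact ⟨isDist_dirac _, dirac none, rfl, fun y => le_rfl⟩
  | some a => exact ⟨isDist_dirac _, dirac (some a), rfl, fun y => le_rfl⟩

/-- monad left identity: `η†(S) = S` for `S ∈ C(X)`. -/
theorem kleisli_eta_id {X : Type*} [Countable X]
    (S : Set (Option X → ℝ)) (hS : memC S) :
    kleisli (fun x : X => eta x) S = S := by
  ext ξ
  constructor
  · rintro ⟨μ, hμS, ν, hν, hξ⟩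
    have hμ : IsDist μ := hS.2.1 μ hμS
    set ν' : Option X → Option X → ℝ :=
      fun x => if 0 < μ x then ν x else dirac x with hν'def
    have hν'mem : ∀ x, ν' x ∈ fbot (fun x : X => eta x) x := by
      intro x
      simp only [hν'def]
      split
      · exact hν x ‹_›
      · exact dirac_mem_fbot_eta x
    have hν'dist : ∀ x, IsDist (ν' x) := by
      intro x
      cases x with
      | none => exact (hν'mem none).1
      | some a => exact (hν'mem (some a)).1
    set g : Option X × Option X → ℝ := fun p => μ p.1 * ν' p.1 p.2 with hgdef
    have hg0 : ∀ p, 0 ≤ g p := fun p =>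
      mul_nonneg (hμ.1 p.1) ((hν'dist p.1).1 p.2)
    have hfiber : ∀ x, HasSum (fun y => g (x, y)) (μ x) := by
      intro x
      simpa using (hν'dist x).2.mul_left (μ x)
    have hgsum : Summable g :=
      (summable_prod_of_nonneg hg0).2
        ⟨fun x => (hfiber x).summable, by
          simpa only [fun x => (hfiber x).tsum_eq] using hμ.2.summable⟩
    have htsum : HasSum g 1 := by
      have h1 : ∑' p, g p = 1 := by
        rw [Summable.tsum_prod' hgsum (fun x => (hfiber x).summable)]
        simp only [fun x => (hfiber x).tsum_eq]
        exact hμ.2.tsum_eq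
      exact h1 ▸ hgsum.hasSum
    have hg' : HasSum (fun p : Option X × Option X => g p.swap) 1 :=
      ((Equiv.prodComm (Option X) (Option X)).hasSum_iff).2 htsum
    have hfib2 : ∀ y, Summable fun x => g (x, y) := fun y =>
      hg'.summable.prod_factor y
    have hξeq : ∀ y, ξ y = ∑' x, g (x, y) := by
      intro y
      rw [hξ y]
      refine tsum_congr fun x => ?_
      simp only [hgdef, hν'def]
      split
      · rfl
      · have : μ x = 0 := le_antisymm (not_lt.1 ‹_›) (hμ.1 x)
        simp [this]
    have hξsum : HasSum ξ 1 := by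
      refine hg'.prod_fiberwise fun y => ?_
      have := (hfib2 y).hasSum
      rwa [← hξeq y] at this
    have hξ0 : ∀ y, 0 ≤ ξ y := fun y => by
      rw [hξeq y]; exact tsum_nonneg fun x => hg0 _
    have hle : dle μ ξ := by
      intro z
      have h1 : (1:ℝ) ≤ ν' (some z) (some z) := by
        simp only [hν'def]
        split
        · rcases (hν (some z) ‹_›).2 with ⟨μ0, hμ0, hdle⟩
          have he : μ0 = dirac (some z) := hμ0
          simpa [he, dirac] using hdle z
        · simp [dirac]
      have h2 : μ (some z) ≤ g (some z, some z) := by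
        calc μ (some z) = μ (some z) * 1 := (mul_one _).symm
        _ ≤ μ (some z) * ν' (some z) (some z) :=
            mul_le_mul_of_nonneg_left h1 (hμ.1 _)
      calc μ (some z) ≤ g (some z, some z) := h2
      _ ≤ ∑' x, g (x, some z) := Summable.le_tsum (hfib2 (some z)) _ fun x _ => hg0 _
      _ = ξ (some z) := (hξeq (some z)).symm
    rw [← hS.2.2.2.2]
    exact ⟨⟨hξ0, hξsum⟩, μ, hμS, hle⟩
  · intro hξ
    refine ⟨ξ, hξ, fun x => dirac x, fun x _ => dirac_mem_fbot_eta x, fun y => ?_⟩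
    rw [tsum_eq_single y]
    · simp [dirac]
    · intro x hx
      simp [dirac, (Ne.symm hx)]


end DOL
end

section
/- (Monad right identity.) Let X and Y be countable sets and f : X → C(Y). Then for every x ∈ X, f†(η(x)) = f(x), where η(x) := ↑{δ_x}. -/
open scoped Classical
open Filter Topology

namespace DOL

lemma eta_eq_singleton {X : Type*} (x : X) (μ : Option X → ℝ) (hμ : μ ∈ eta x) :
    μ = dirac (some x) := by
  obtain ⟨⟨hpos, hsum⟩, ν, hν, hle⟩ := hμ
  rcases hν with rfl
  have h1 : μ (some x) ≤ 1 := le_hasSum hsum (some x) (fun b _ => hpos b)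
  have h2 : (1 : ℝ) ≤ μ (some x) := by
    have := hle x
    simpa [dirac] using this
  have hx1 : μ (some x) = 1 := le_antisymm h1 h2
  funext z
  by_cases hz : z = some x
  · simp [hz, hx1, dirac]
  · have hz0 : μ z = 0 := by
      have hsub : ({some x, z} : Finset (Option X)).sum μ ≤ 1 :=
        sum_le_hasSum _ (fun b _ => hpos b) hsum
      have : μ (some x) + μ z ≤ 1 := by
        rwa [Finset.sum_pair (by simpa using (Ne.symm hz))] at hsub
      nlinarith [hpos z]
    simp [dirac, hz, hz0]

lemma dirac_mem_eta {X : Type*} (x : X) : dirac (some x) ∈ eta x := by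
  refine ⟨⟨fun y => ?_, ?_⟩, dirac (some x), rfl, fun y => le_refl _⟩
  · unfold dirac; split <;> norm_num
  · convert hasSum_ite_eq (some x) (1 : ℝ) using 2 with y; simp [dirac]

/-- monad right identity: `f†(η(x)) = f(x)`. -/
theorem kleisli_comp_eta {X Y : Type*} [Countable X] [Countable Y]
    (f : X → Set (Option Y → ℝ)) (hf : ∀ x, memC (f x)) (x : X) :
    kleisli f (eta x) = f x := by
  ext ξ
  constructor
  · rintro ⟨μ, hμ, ν, hν, hξ⟩
    have hμd := eta_eq_singleton x μ hμ
    subst hμd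
    have hmem : ν (some x) ∈ f x := hν (some x) (by simp [dirac])
    have : ξ = ν (some x) := by
      funext y
      rw [hξ y]
      rw [tsum_eq_single (some x) (fun b hb => by simp [dirac, hb])]
      simp [dirac]
    rw [this]; exact hmem
  · intro hξ
    refine ⟨dirac (some x), dirac_mem_eta x, fun _ => ξ, fun z hz => ?_, fun y => ?_⟩
    · have : z = some x := by
        by_contra h
        simp [dirac, h] at hz
      rw [this]; exact hξ
    · rw [tsum_eq_single (some x) (fun b hb => by simp [dirac, hb])]
      simp [dirac]

end DOL
end

section
/- Let X, Y, Z be countable sets, μ ∈ D(X), let (ν_x)_{x∈supp(μ)} be a family with each ν_x ∈ D(Y), and let (S_y)_{y∈Y} be a family with each S_y ∈ C(Z). Then the following two subsets of D(Z_⊥) are equal: { ∑_{x∈supp(μ)} μ(x) · ∑_{y∈supp(ν_x)} ν_x(y) · ν'_{x,y} : ν'_{x,y} ∈ S_y for all x ∈ supp(μ) and y ∈ supp(ν_x) } and { ∑_{y∈Y} (∑_{x∈supp(μ)} μ(x)·ν_x)(y) · ν'_y : ν'_y ∈ S_y for all y ∈ Y }. -/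
open scoped Classical
open Filter Topology

namespace DOL

private lemma IsDist.le_one' {Z : Type*} {μ : Z → ℝ} (h : IsDist μ) (z : Z) : μ z ≤ 1 :=
  le_hasSum h.2 z (fun j _ => h.1 j)

private lemma convex_of_isConvexSet {Z : Type*} {S : Set (Z → ℝ)} (h : IsConvexSet S) :
    Convex ℝ S := by
  intro a ha b hb p q hp hq hpq
  have hq' : q = 1 - p := by linarith
  subst hq'
  have h2 := h a ha b hb p hp (by linarith)
  have he : p • a + (1 - p) • b = (fun z => p * a z + (1 - p) * b z) := by
    funext z
    simp [smul_eq_mul]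
  rw [he]
  exact h2

/-- A closed convex nonempty set of functions is stable under countable convex
combinations. -/
private lemma tsum_mem_of_closed_convex {X Z : Type*} {S : Set (Z → ℝ)}
    (hne : S.Nonempty) (hconv : Convex ℝ S) (hcl : IsClosed S)
    (p : X → ℝ) (hp : ∀ x, 0 ≤ p x) (hps : HasSum p 1)
    (s : X → Z → ℝ) (hs : ∀ x, 0 < p x → s x ∈ S)
    (hsm : ∀ z, Summable fun x => p x * s x z) :
    (fun z => ∑' x, p x * s x z) ∈ S := by
  obtain ⟨d, hd⟩ := hne
  set s' : X → Z → ℝ := fun x => if 0 < p x then s x else d with hs'def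
  have hs'S : ∀ x, s' x ∈ S := by
    intro x
    by_cases h : 0 < p x
    · simpa [hs'def, h] using hs x h
    · simpa [hs'def, h] using hd
  have hps' : ∀ x z, p x * s x z = p x * s' x z := by
    intro x z
    by_cases h : 0 < p x
    · simp [hs'def, h]
    · have h0 : p x = 0 := le_antisymm (not_lt.1 h) (hp x)
      simp [h0]
  have hsm' : ∀ z, Summable fun x => p x * s' x z := by
    intro z
    exact (hsm z).congr (fun x => hps' x z)
  have htsum' : ∀ z, ∑' x, p x * s x z = ∑' x, p x * s' x z := by
    intro z
    exact tsum_congr (fun x => hps' x z)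
  classical
  set g : Finset X → (Z → ℝ) := fun F =>
    if h : 0 < ∑ x ∈ F, p x then (fun z => (∑ x ∈ F, p x * s' x z) / (∑ x ∈ F, p x)) else d
    with hgdef
  have hgS : ∀ F, g F ∈ S := by
    intro F
    by_cases h : 0 < ∑ x ∈ F, p x
    · have hmem := hconv.sum_mem (t := F) (w := fun x => p x / ∑ x ∈ F, p x) (z := s')
        (fun i _ => div_nonneg (hp i) h.le)
        (by rw [← Finset.sum_div, div_self h.ne'])
        (fun i _ => hs'S i)
      have heq : (∑ i ∈ F, (p i / ∑ x ∈ F, p x) • s' i)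
          = (fun z => (∑ x ∈ F, p x * s' x z) / (∑ x ∈ F, p x)) := by
        funext z
        rw [Finset.sum_apply, Finset.sum_div]
        refine Finset.sum_congr rfl (fun i _ => ?_)
        simp only [Pi.smul_apply, smul_eq_mul]
        ring
      rw [hgdef]
      simp only [dif_pos h]
      rw [← heq]
      exact hmem
    · rw [hgdef]
      simpa [dif_neg h] using hd
  have hT : Filter.Tendsto (fun F : Finset X => ∑ x ∈ F, p x) Filter.atTop (𝓝 1) := hps
  have hev : ∀ᶠ F : Finset X in Filter.atTop, 0 < ∑ x ∈ F, p x :=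
    hT.eventually (eventually_gt_nhds (by norm_num : (0:ℝ) < 1))
  have hlim : Filter.Tendsto g Filter.atTop (𝓝 (fun z => ∑' x, p x * s x z)) := by
    rw [tendsto_pi_nhds]
    intro z
    have h1 : Filter.Tendsto (fun F : Finset X => ∑ x ∈ F, p x * s' x z) Filter.atTop
        (𝓝 (∑' x, p x * s' x z)) := (hsm' z).hasSum
    have h2 := h1.div hT one_ne_zero
    rw [htsum' z]
    have h3 : Filter.Tendsto (fun F : Finset X =>
        (∑ x ∈ F, p x * s' x z) / (∑ x ∈ F, p x)) Filter.atTop (𝓝 (∑' x, p x * s' x z)) := by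
      rw [div_one] at h2
      exact h2
    refine h3.congr' ?_
    filter_upwards [hev] with F hF
    simp [hgdef, hF]
  exact hcl.mem_of_tendsto hlim (Filter.Eventually.of_forall hgS)

/-- Nonnegativity of the double-mixture terms. -/
private lemma mixterm_nonneg {X Y : Type*}
    {μ : X → ℝ} (hμ : IsDist μ) {ν : X → Y → ℝ} (hν : ∀ x, 0 < μ x → IsDist (ν x))
    {t : X → Y → ℝ} (ht : ∀ x y, 0 < μ x → 0 ≤ t x y ∧ t x y ≤ 1) :
    ∀ x y, 0 ≤ μ x * (ν x y * t x y) := by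
  intro x y
  rcases (hμ.1 x).eq_or_lt with h | h
  · rw [← h, zero_mul]
  · exact mul_nonneg h.le (mul_nonneg ((hν x h).1 y) ((ht x y h).1))

/-- Summability in `x` of the weights `μ x * ν x y`. -/
private lemma summable_weight {X Y : Type*}
    {μ : X → ℝ} (hμ : IsDist μ) {ν : X → Y → ℝ} (hν : ∀ x, 0 < μ x → IsDist (ν x))
    (y : Y) : Summable fun x => μ x * ν x y := by
  refine Summable.of_nonneg_of_le (fun x => ?_) (fun x => ?_) hμ.2.summable
  · rcases (hμ.1 x).eq_or_lt with h | h
    · rw [← h, zero_mul]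
    · exact mul_nonneg h.le ((hν x h).1 y)
  · rcases (hμ.1 x).eq_or_lt with h | h
    · rw [← h, zero_mul]
    · exact mul_le_of_le_one_right h.le ((hν x h).le_one' y)

/-- Fubini for the double mixtures appearing in the associativity proof. -/
private lemma tsum_swap_mix {X Y : Type*} [Countable X] [Countable Y]
    {μ : X → ℝ} (hμ : IsDist μ) {ν : X → Y → ℝ} (hν : ∀ x, 0 < μ x → IsDist (ν x))
    {t : X → Y → ℝ} (ht : ∀ x y, 0 < μ x → 0 ≤ t x y ∧ t x y ≤ 1) :
    ∑' x, ∑' y, μ x * (ν x y * t x y) = ∑' y, ∑' x, μ x * (ν x y * t x y) := by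
  set F : X → Y → ℝ := fun x y => μ x * (ν x y * t x y) with hF
  have hF0 : ∀ x y, 0 ≤ F x y := mixterm_nonneg hμ hν ht
  have hFle : ∀ x y, F x y ≤ μ x * ν x y := by
    intro x y
    rcases (hμ.1 x).eq_or_lt with h | h
    · simp [hF, ← h]
    · exact mul_le_mul_of_nonneg_left
        (mul_le_of_le_one_right ((hν x h).1 y) ((ht x y h).2)) h.le
  have hrow : ∀ x, Summable (F x) := by
    intro x
    rcases (hμ.1 x).eq_or_lt with h | h
    · exact summable_zero.congr (fun y => by simp [hF, ← h])
    · refine Summable.of_nonneg_of_le (fun y => hF0 x y) (fun y => hFle x y) ?_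
      exact (hν x h).2.summable.mul_left (μ x)
  have hcol : Summable fun x => ∑' y, F x y := by
    refine Summable.of_nonneg_of_le (fun x => tsum_nonneg (hF0 x)) (fun x => ?_) hμ.2.summable
    rcases (hμ.1 x).eq_or_lt with h | h
    · have : ∀ y, F x y = 0 := fun y => by simp [hF, ← h]
      simp [this, ← h]
    · calc ∑' y, F x y ≤ ∑' y, μ x * ν x y :=
            Summable.tsum_le_tsum (hFle x) (hrow x) ((hν x h).2.summable.mul_left (μ x))
        _ = μ x * ∑' y, ν x y := tsum_mul_left
        _ = μ x := by rw [(hν x h).2.tsum_eq, mul_one]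
  have hunc : Summable (Function.uncurry F) := by
    refine (summable_prod_of_nonneg (f := Function.uncurry F) (fun p => hF0 p.1 p.2)).2 ⟨?_, ?_⟩
    · exact hrow
    · exact hcol
  have hcols : ∀ y, Summable fun x => F x y := by
    intro y
    exact hunc.prod_symm.prod_factor y
  exact (Summable.tsum_comm' hunc hrow hcols).symm

/-- associativity of convex mixtures of convex sets. -/
theorem convex_mix_assoc {X Y Z : Type*} [Countable X] [Countable Y] [Countable Z]
    (μ : X → ℝ) (hμ : IsDist μ)
    (ν : X → Y → ℝ) (hν : ∀ x, 0 < μ x → IsDist (ν x))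
    (S : Y → Set (Option Z → ℝ)) (hS : ∀ y, memC (S y)) :
    {ξ : Option Z → ℝ | ∃ ν' : X → Y → (Option Z → ℝ),
        (∀ x y, 0 < μ x → 0 < ν x y → ν' x y ∈ S y) ∧
        (∀ z, ξ z = ∑' x, μ x * ∑' y, ν x y * ν' x y z)} =
    {ξ : Option Z → ℝ | ∃ ν' : Y → (Option Z → ℝ),
        (∀ y, ν' y ∈ S y) ∧
        (∀ z, ξ z = ∑' y, (∑' x, μ x * ν x y) * ν' y z)} := by
  classical
  have hdS : ∀ y, (hS y).1.choose ∈ S y := fun y => (hS y).1.choose_spec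
  set d : Y → (Option Z → ℝ) := fun y => (hS y).1.choose with hddef
  have hterm : ∀ x y, 0 ≤ μ x * ν x y := by
    intro x y
    rcases (hμ.1 x).eq_or_lt with h | h
    · rw [← h, zero_mul]
    · exact mul_nonneg h.le ((hν x h).1 y)
  have hwnn : ∀ y, 0 ≤ ∑' x, μ x * ν x y := fun y => tsum_nonneg (fun x => hterm x y)
  have hwsm : ∀ y, Summable fun x => μ x * ν x y := fun y => summable_weight hμ hν y
  ext ξ
  simp only [Set.mem_setOf_eq]
  constructor
  · rintro ⟨ν'', hmem, hξ⟩
    set t : X → Y → (Option Z → ℝ) :=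
      fun x y => if 0 < μ x ∧ 0 < ν x y then ν'' x y else d y with htdef
    have htS : ∀ x y, t x y ∈ S y := by
      intro x y
      by_cases h : 0 < μ x ∧ 0 < ν x y
      · simpa [htdef, h] using hmem x y h.1 h.2
      · simpa [htdef, h] using hdS y
    have ht01 : ∀ x y z, 0 ≤ t x y z ∧ t x y z ≤ 1 := fun x y z =>
      ⟨((hS y).2.1 _ (htS x y)).1 z, ((hS y).2.1 _ (htS x y)).le_one' z⟩
    set w : Y → ℝ := fun y => ∑' x, μ x * ν x y with hwdef
    set ν' : Y → (Option Z → ℝ) := fun y =>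
      if h : 0 < w y then (fun z => ∑' x, (μ x * ν x y / w y) * t x y z) else d y with hν'def
    refine ⟨ν', fun y => ?_, fun z => ?_⟩
    · by_cases h : 0 < w y
      · have hp : ∀ x, 0 ≤ μ x * ν x y / w y := fun x => div_nonneg (hterm x y) (hwnn y)
        have hps : HasSum (fun x => μ x * ν x y / w y) 1 := by
          have h2 := (hwsm y).hasSum.div_const (w y)
          have h3 : (∑' x, μ x * ν x y) / w y = 1 := div_self h.ne'
          rwa [h3] at h2
        have hsm : ∀ z, Summable fun x => (μ x * ν x y / w y) * t x y z := by
          intro z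
          refine Summable.of_nonneg_of_le
            (fun x => mul_nonneg (hp x) ((ht01 x y z).1))
            (fun x => mul_le_of_le_one_right (hp x) ((ht01 x y z).2)) hps.summable
        have hmem2 := tsum_mem_of_closed_convex ⟨d y, hdS y⟩
          (convex_of_isConvexSet (hS y).2.2.1) (hS y).2.2.2.1
          (fun x => μ x * ν x y / w y) hp hps (fun x => t x y) (fun x _ => htS x y) hsm
        rw [hν'def]
        simpa [dif_pos h] using hmem2
      · rw [hν'def]
        simpa [dif_neg h] using hdS y
    · have ht01' : ∀ x y, 0 < μ x → 0 ≤ t x y z ∧ t x y z ≤ 1 := fun x y _ => ht01 x y z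
      calc ξ z = ∑' x, μ x * ∑' y, ν x y * ν'' x y z := hξ z
        _ = ∑' x, ∑' y, μ x * (ν x y * t x y z) := by
            refine tsum_congr (fun x => ?_)
            rcases (hμ.1 x).eq_or_lt with h | h
            · rw [← h]
              simp
            · rw [← tsum_mul_left]
              refine tsum_congr (fun y => ?_)
              rcases ((hν x h).1 y).eq_or_lt with hy | hy
              · rw [← hy]
                ring
              · simp [htdef, h, hy]
        _ = ∑' y, ∑' x, μ x * (ν x y * t x y z) :=
            tsum_swap_mix hμ hν (t := fun x y => t x y z) ht01'
        _ = ∑' y, w y * ν' y z := by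
            refine tsum_congr (fun y => ?_)
            by_cases h : 0 < w y
            · rw [hν'def]
              simp only [dif_pos h]
              rw [← tsum_mul_left]
              refine tsum_congr (fun x => ?_)
              field_simp
            · have hw0 : w y = 0 := le_antisymm (not_lt.1 h) (hwnn y)
              have hz : ∀ x, μ x * ν x y = 0 := by
                intro x
                have hle : μ x * ν x y ≤ w y := Summable.le_tsum (hwsm y) x (fun j _ => hterm j y)
                have := hterm x y
                linarith
              have hzz : ∀ x, μ x * (ν x y * t x y z) = 0 := fun x => by
                rw [← mul_assoc, hz x, zero_mul]
              simp [hzz, hw0]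
  · rintro ⟨ν', hmem, hξ⟩
    refine ⟨fun x y => ν' y, fun x y _ _ => hmem y, fun z => ?_⟩
    have hdist : ∀ y, IsDist (ν' y) := fun y => (hS y).2.1 _ (hmem y)
    have ht01 : ∀ x y, 0 < μ x → 0 ≤ ν' y z ∧ ν' y z ≤ 1 :=
      fun x y _ => ⟨(hdist y).1 z, (hdist y).le_one' z⟩
    calc ξ z = ∑' y, (∑' x, μ x * ν x y) * ν' y z := hξ z
      _ = ∑' y, ∑' x, μ x * (ν x y * ν' y z) := by
          refine tsum_congr (fun y => ?_)
          rw [← tsum_mul_right]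
          exact tsum_congr (fun x => mul_assoc _ _ _)
      _ = ∑' x, ∑' y, μ x * (ν x y * ν' y z) :=
          (tsum_swap_mix hμ hν (t := fun x y => ν' y z) ht01).symm
      _ = ∑' x, μ x * ∑' y, ν x y * ν' y z := tsum_congr (fun x => tsum_mul_left)

end DOL
end

section
/- (C(X) is a dcpo under the Smyth order.) Let X be a countable set and let {S_i}_{i∈I} be a nonempty family of elements of C(X) that is directed under reverse inclusion (for any i, j ∈ I there is k ∈ I with S_k ⊆ S_i ∩ S_j). Then the intersection ∩_{i∈I} S_i is again an element of C(X); in particular it is nonempty, convex, closed in the product topology on [0,1]^{X_⊥}, and up-closed. -/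
open scoped Classical
open Filter Topology

namespace DOL

/-- `C(X)` is a dcpo under the Smyth order: the intersection of a
nonempty reverse-inclusion-directed family of elements of `C(X)` is in `C(X)`. -/
theorem directed_iInter_memC {X : Type*} [Countable X] {I : Type*} [Nonempty I]
    (S : I → Set (Option X → ℝ)) (hC : ∀ i, memC (S i))
    (hdir : ∀ i j, ∃ k, S k ⊆ S i ∩ S j) :
    memC (⋂ i, S i) := by
  have hsub : ∀ i, S i ⊆ Set.pi Set.univ (fun _ : Option X => Set.Icc (0:ℝ) 1) := by
    intro i μ hμ
    obtain ⟨hnn, hsum⟩ := (hC i).2.1 μ hμ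
    intro x _
    exact ⟨hnn x, le_hasSum hsum x (fun j _ => hnn j)⟩
  have hK : IsCompact (Set.pi Set.univ (fun _ : Option X => Set.Icc (0:ℝ) 1)) :=
    isCompact_univ_pi (fun _ => isCompact_Icc)
  have hcpt : ∀ i, IsCompact (S i) := fun i =>
    hK.of_isClosed_subset (hC i).2.2.2.1 (hsub i)
  have hne : (⋂ i, S i).Nonempty := by
    apply IsCompact.nonempty_iInter_of_directed_nonempty_isCompact_isClosed
    · intro i j
      obtain ⟨k, hk⟩ := hdir i j
      exact ⟨k, fun _ h => (hk h).1, fun _ h => (hk h).2⟩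
    · exact fun i => (hC i).1
    · exact hcpt
    · exact fun i => (hC i).2.2.2.1
  refine ⟨hne, ?_, ?_, ?_, ?_⟩
  · intro μ hμ
    exact (hC (Classical.arbitrary I)).2.1 μ (Set.mem_iInter.1 hμ _)
  · intro μ hμ ν hν p hp hp1
    refine Set.mem_iInter.2 fun i => ?_
    exact (hC i).2.2.1 μ (Set.mem_iInter.1 hμ i) ν (Set.mem_iInter.1 hν i) p hp hp1
  · exact isClosed_iInter (fun i => (hC i).2.2.2.1)
  · apply Set.Subset.antisymm
    · rintro ν ⟨hνd, μ, hμ, hle⟩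
      refine Set.mem_iInter.2 fun i => ?_
      have : ν ∈ upClo (S i) := ⟨hνd, μ, Set.mem_iInter.1 hμ i, hle⟩
      rwa [(hC i).2.2.2.2] at this
    · intro μ hμ
      exact ⟨(hC (Classical.arbitrary I)).2.1 μ (Set.mem_iInter.1 hμ _),
        μ, hμ, fun x => le_rfl⟩

end DOL
end

section
/- (Decomposition of larger distributions along convex combinations.) Let Σ be a countable set, p ∈ [0,1], and μ, μ₁, μ₂, ν ∈ D(Σ_⊥) with μ = p·μ₁ + (1−p)·μ₂. If μ ⊑_D ν, then there exist ν₁, ν₂ ∈ D(Σ_⊥) such that ν = p·ν₁ + (1−p)·ν₂ and μ₁ ⊑_D ν₁ and μ₂ ⊑_D ν₂. -/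
open scoped Classical
open Filter Topology

namespace DOL

/-- decomposition of larger distributions along convex combinations. -/
theorem decompose_above_convex {St : Type*} [Countable St]
    (p : ℝ) (hp0 : 0 ≤ p) (hp1 : p ≤ 1)
    (μ μ₁ μ₂ ν : Option St → ℝ)
    (hμ : IsDist μ) (h1 : IsDist μ₁) (h2 : IsDist μ₂) (hν : IsDist ν)
    (hmix : μ = fun σ => p * μ₁ σ + (1 - p) * μ₂ σ)
    (hle : dle μ ν) :
    ∃ ν₁ ν₂ : Option St → ℝ, IsDist ν₁ ∧ IsDist ν₂ ∧
      (ν = fun σ => p * ν₁ σ + (1 - p) * ν₂ σ) ∧ dle μ₁ ν₁ ∧ dle μ₂ ν₂ := by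
  classical
  -- difference function
  obtain ⟨g, hg⟩ : ∃ g : Option St → ℝ, g = fun x => ν x - μ x := ⟨_, rfl⟩
  have hgsum : HasSum g 0 := by
    rw [hg]
    have := hν.2.sub hμ.2
    simpa using this
  have hgnonneg : ∀ x : St, 0 ≤ g (some x) := by
    intro x; rw [hg]; exact sub_nonneg.2 (hle x)
  -- sum of g with none removed
  have hupd : HasSum (Function.update g none 0) (0 - g none + 0) :=
    hgsum.update none 0
  have hupd_nonneg : ∀ x, 0 ≤ Function.update g none 0 x := by
    intro x
    rcases x with _ | y
    · simp [Function.update]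
    · simpa [Function.update] using hgnonneg y
  have hEnn : 0 ≤ 0 - g none + 0 :=
    hupd.nonneg hupd_nonneg
  -- E := μ none - ν none ≥ 0
  have hE : ν none ≤ μ none := by
    have : g none ≤ 0 := by linarith
    simpa [hg, sub_nonpos] using this
  have hμn0 : 0 ≤ μ none := hμ.1 none
  -- mixture identity at none
  have hmixn : μ none = p * μ₁ none + (1 - p) * μ₂ none := by
    rw [hmix]
  -- coefficients
  set c₁ : ℝ := if μ none = 0 then 1 else μ₁ none / μ none with hc₁
  set c₂ : ℝ := if μ none = 0 then 1 else μ₂ none / μ none with hc₂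
  have hc₁0 : 0 ≤ c₁ := by
    rw [hc₁]; split
    · norm_num
    · exact div_nonneg (h1.1 none) hμn0
  have hc₂0 : 0 ≤ c₂ := by
    rw [hc₂]; split
    · norm_num
    · exact div_nonneg (h2.1 none) hμn0
  have hccomb : p * c₁ + (1 - p) * c₂ = 1 := by
    rw [hc₁, hc₂]; split
    · ring
    · rename_i h
      field_simp
      linarith [hmixn]
  -- bound c_i * (μ none - ν none) ≤ μ_i none
  have hbound₁ : c₁ * (μ none - ν none) ≤ μ₁ none := by
    rw [hc₁]; split
    · rename_i h
      have : ν none = 0 := le_antisymm (h ▸ hE) (hν.1 none)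
      simp [h, this, h1.1 none]
    · rename_i h
      have hμpos : 0 < μ none := lt_of_le_of_ne hμn0 (Ne.symm h)
      rw [div_mul_eq_mul_div, div_le_iff₀ hμpos]
      have := h1.1 none
      nlinarith [hν.1 none]
  have hbound₂ : c₂ * (μ none - ν none) ≤ μ₂ none := by
    rw [hc₂]; split
    · rename_i h
      have : ν none = 0 := le_antisymm (h ▸ hE) (hν.1 none)
      simp [h, this, h2.1 none]
    · rename_i h
      have hμpos : 0 < μ none := lt_of_le_of_ne hμn0 (Ne.symm h)
      rw [div_mul_eq_mul_div, div_le_iff₀ hμpos]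
      have := h2.1 none
      nlinarith [hν.1 none]
  -- the witnesses
  refine ⟨fun x => μ₁ x + c₁ * g x, fun x => μ₂ x + c₂ * g x, ?_, ?_, ?_, ?_, ?_⟩
  · constructor
    · intro x
      rcases x with _ | y
      · show 0 ≤ μ₁ none + c₁ * g none
        have : g none = -(μ none - ν none) := by rw [hg]; ring
        rw [this]
        nlinarith [hbound₁]
      · exact add_nonneg (h1.1 _) (mul_nonneg hc₁0 (hgnonneg y))
    · simpa using h1.2.add ((hgsum.mul_left c₁))
  · constructor
    · intro x
      rcases x with _ | y
      · show 0 ≤ μ₂ none + c₂ * g none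
        have : g none = -(μ none - ν none) := by rw [hg]; ring
        rw [this]
        nlinarith [hbound₂]
      · exact add_nonneg (h2.1 _) (mul_nonneg hc₂0 (hgnonneg y))
    · simpa using h2.2.add ((hgsum.mul_left c₂))
  · funext x
    have hmx : μ x = p * μ₁ x + (1 - p) * μ₂ x := by rw [hmix]
    have : ν x = μ x + g x := by rw [hg]; simp
    show _ = p * (μ₁ x + c₁ * g x) + (1 - p) * (μ₂ x + c₂ * g x)
    rw [this, hmx]
    linear_combination (-g x) * hccomb
  · intro x
    show μ₁ (some x) ≤ μ₁ (some x) + c₁ * g (some x)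
    have := mul_nonneg hc₁0 (hgnonneg x)
    linarith
  · intro x
    show μ₂ (some x) ≤ μ₂ (some x) + c₂ * g (some x)
    have := mul_nonneg hc₂0 (hgnonneg x)
    linarith

end DOL
end

section
/- (Up-closure distributes over probabilistic combination.) Let Σ be a countable set, p ∈ [0,1], and μ₁, μ₂ ∈ D(Σ_⊥). Then ↑{p·μ₁ + (1−p)·μ₂} = ↑{μ₁} ⊕_p ↑{μ₂}. -/
open scoped Classical
open Filter Topology

namespace DOL

lemma hasSum_option_some {X : Type*} (f : Option X → ℝ) (s : ℝ)
    (h : HasSum (fun x => f (some x)) s) : HasSum f (s + f none) := by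
  have hu : HasSum (Function.update f none 0) s := by
    rw [← (Option.some_injective X).hasSum_iff (by
      intro o ho
      cases o with
      | none => simp
      | some x => exact absurd ⟨x, rfl⟩ ho)]
    convert h using 1
    funext x; simp
  have := hu.update none (f none)
  simpa [Function.update_idem, Function.update_eq_self, add_comm] using this

lemma hasSum_option_some' {X : Type*} (f : Option X → ℝ) (a : ℝ)
    (h : HasSum f a) : HasSum (fun x => f (some x)) (a - f none) := by
  have hu : HasSum (Function.update f none 0) (a - f none) := by
    have := h.update none 0
    simpa [sub_eq_neg_add] using this
  rw [← (Option.some_injective X).hasSum_iff (by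
      intro o ho
      cases o with
      | none => simp
      | some x => exact absurd ⟨x, rfl⟩ ho)] at hu
  convert hu using 1
  funext x; simp

/-- up-closure distributes over probabilistic combination:
`↑{p·μ₁ + (1−p)·μ₂} = ↑{μ₁} ⊕_p ↑{μ₂}`. -/
theorem upClo_mix {St : Type*} [Countable St]
    (p : ℝ) (hp0 : 0 ≤ p) (hp1 : p ≤ 1)
    (μ₁ μ₂ : Option St → ℝ) (h1 : IsDist μ₁) (h2 : IsDist μ₂) :
    upClo {fun σ => p * μ₁ σ + (1 - p) * μ₂ σ} = pchoice p (upClo {μ₁}) (upClo {μ₂}) := by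
  have hq0 : (0:ℝ) ≤ 1 - p := by linarith
  ext ν
  constructor
  · rintro ⟨⟨hνpos, hνsum⟩, μ, hμ, hle⟩
    rw [Set.mem_singleton_iff] at hμ
    subst hμ
    -- notation
    set n₁ := μ₁ none with hn₁
    set n₂ := μ₂ none with hn₂
    set M := p * n₁ + (1 - p) * n₂ with hM
    have hn₁0 : 0 ≤ n₁ := h1.1 none
    have hn₂0 : 0 ≤ n₂ := h2.1 none
    have hM0 : 0 ≤ M := by positivity
    set e : St → ℝ := fun x => ν (some x) - (p * μ₁ (some x) + (1 - p) * μ₂ (some x)) with he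
    have he0 : ∀ x, 0 ≤ e x := fun x => sub_nonneg.2 (hle x)
    -- HasSum e (M - ν none)
    have hs1 : HasSum (fun x => μ₁ (some x)) (1 - n₁) := hasSum_option_some' μ₁ 1 h1.2
    have hs2 : HasSum (fun x => μ₂ (some x)) (1 - n₂) := hasSum_option_some' μ₂ 1 h2.2
    have hsν : HasSum (fun x => ν (some x)) (1 - ν none) := hasSum_option_some' ν 1 hνsum
    have hse : HasSum e (M - ν none) := by
      have := hsν.sub ((hs1.mul_left p).add (hs2.mul_left (1 - p)))
      convert this using 1
      · rfl
      ring
    have hsle : M - ν none ≤ M := by linarith [hνpos none]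
    have hs0 : 0 ≤ M - ν none := hse.nonneg he0
    rcases eq_or_lt_of_le hM0 with hMeq | hMpos
    · -- M = 0 : ν = p μ₁ + (1-p) μ₂ exactly
      have hνn : ν none = 0 := by
        have hM0' : M = 0 := hMeq.symm
        linarith [hνpos none, hsle]
      have hezero : ∀ x, e x = 0 := by
        intro x
        have hx : e x ≤ M - ν none := le_hasSum hse x (fun i _ => he0 i)
        have : M - ν none = 0 := by rw [← hMeq, hνn]; ring
        linarith [he0 x]
      refine ⟨μ₁, ⟨h1, μ₁, rfl, fun x => le_refl _⟩, μ₂, ⟨h2, μ₂, rfl, fun x => le_refl _⟩, ?_⟩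
      funext o
      cases o with
      | none =>
        rw [hνn]
        have hz : M = 0 := hMeq.symm
        rw [hM, hn₁, hn₂] at hz
        linarith
      | some x =>
        have := hezero x
        simp only [he] at this
        linarith
    · -- M > 0
      set s := M - ν none with hsdef
      set ν₁ : Option St → ℝ := fun o => Option.rec (n₁ - s * n₁ / M) (fun x => μ₁ (some x) + e x * (n₁ / M)) o with hν₁
      set ν₂ : Option St → ℝ := fun o => Option.rec (n₂ - s * n₂ / M) (fun x => μ₂ (some x) + e x * (n₂ / M)) o with hν₂
      have hsM : s ≤ M := hsle
      have hratio1 : 0 ≤ n₁ / M := div_nonneg hn₁0 (le_of_lt hMpos)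
      have hratio2 : 0 ≤ n₂ / M := div_nonneg hn₂0 (le_of_lt hMpos)
      have hd1 : IsDist ν₁ := by
        constructor
        · intro o
          cases o with
          | none =>
            show 0 ≤ n₁ - s * n₁ / M
            have : s * n₁ / M ≤ M * n₁ / M := by
              apply div_le_div_of_nonneg_right _ hMpos.le
              exact mul_le_mul_of_nonneg_right hsM hn₁0
            have h2' : M * n₁ / M = n₁ := by field_simp
            linarith
          | some x =>
            have := mul_nonneg (he0 x) hratio1
            have := h1.1 (some x)
            show 0 ≤ μ₁ (some x) + e x * (n₁ / M)
            linarith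
        · have hsum : HasSum (fun x => μ₁ (some x) + e x * (n₁ / M)) ((1 - n₁) + s * (n₁ / M)) :=
            hs1.add (hse.mul_right (n₁ / M))
          have := hasSum_option_some ν₁ ((1 - n₁) + s * (n₁ / M)) hsum
          convert this using 1
          show (1:ℝ) = (1 - n₁) + s * (n₁ / M) + (n₁ - s * n₁ / M)
          field_simp
          ring
      have hd2 : IsDist ν₂ := by
        constructor
        · intro o
          cases o with
          | none =>
            show 0 ≤ n₂ - s * n₂ / M
            have : s * n₂ / M ≤ M * n₂ / M := by
              apply div_le_div_of_nonneg_right _ hMpos.le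
              exact mul_le_mul_of_nonneg_right hsM hn₂0
            have h2' : M * n₂ / M = n₂ := by field_simp
            linarith
          | some x =>
            have := mul_nonneg (he0 x) hratio2
            have := h2.1 (some x)
            show 0 ≤ μ₂ (some x) + e x * (n₂ / M)
            linarith
        · have hsum : HasSum (fun x => μ₂ (some x) + e x * (n₂ / M)) ((1 - n₂) + s * (n₂ / M)) :=
            hs2.add (hse.mul_right (n₂ / M))
          have := hasSum_option_some ν₂ ((1 - n₂) + s * (n₂ / M)) hsum
          convert this using 1
          show (1:ℝ) = (1 - n₂) + s * (n₂ / M) + (n₂ - s * n₂ / M)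
          field_simp
          ring
      refine ⟨ν₁, ⟨hd1, μ₁, rfl, ?_⟩, ν₂, ⟨hd2, μ₂, rfl, ?_⟩, ?_⟩
      · intro x
        show μ₁ (some x) ≤ μ₁ (some x) + e x * (n₁ / M)
        have := mul_nonneg (he0 x) hratio1
        linarith
      · intro x
        show μ₂ (some x) ≤ μ₂ (some x) + e x * (n₂ / M)
        have := mul_nonneg (he0 x) hratio2
        linarith
      · funext o
        cases o with
        | none =>
          show ν none = p * (n₁ - s * n₁ / M) + (1 - p) * (n₂ - s * n₂ / M)
          have hνn : ν none = M - s := by rw [hsdef]; ring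
          rw [hνn, hM]
          have hM' : p * n₁ + (1 - p) * n₂ ≠ 0 := hM ▸ hMpos.ne'
          field_simp
        | some x =>
          show ν (some x) = p * (μ₁ (some x) + e x * (n₁ / M)) + (1 - p) * (μ₂ (some x) + e x * (n₂ / M))
          have hMne : M ≠ 0 := ne_of_gt hMpos
          have hcomb : p * (n₁ / M) + (1 - p) * (n₂ / M) = 1 := by
            field_simp
            exact hM.symm
          have hex : e x = ν (some x) - (p * μ₁ (some x) + (1 - p) * μ₂ (some x)) := rfl
          have : p * (e x * (n₁ / M)) + (1 - p) * (e x * (n₂ / M)) = e x := by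
            have : p * (e x * (n₁ / M)) + (1 - p) * (e x * (n₂ / M)) = e x * (p * (n₁ / M) + (1 - p) * (n₂ / M)) := by ring
            rw [this, hcomb, mul_one]
          linarith [this, hex ▸ (le_refl (e x))]
  · rintro ⟨ν₁, ⟨⟨hν₁pos, hν₁sum⟩, m₁, hm₁, hle₁⟩, ν₂, ⟨⟨hν₂pos, hν₂sum⟩, m₂, hm₂, hle₂⟩, hν⟩
    rw [Set.mem_singleton_iff] at hm₁ hm₂
    subst hm₁; subst hm₂; subst hν
    refine ⟨⟨fun o => ?_, ?_⟩, _, rfl, fun x => ?_⟩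
    · have := hν₁pos o; have := hν₂pos o; positivity
    · have := (hν₁sum.mul_left p).add (hν₂sum.mul_left (1 - p))
      convert this using 1
      · rfl
      ring
    · have a1 := mul_le_mul_of_nonneg_left (hle₁ x) hp0
      have a2 := mul_le_mul_of_nonneg_left (hle₂ x) hq0
      exact add_le_add a1 a2


end DOL
end
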